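/- Define G_k(a,b,q) = 1 + ∑_{u,v≥0, n≥1} d_k(u,v,n) aᵘ bᵛ qⁿ. Then for all k ≥ 1: G_{(2k+1)_{ab}}(a,b,q) = G_{(2k)_b}(a,b,q) + a b q^{2k+1} G_{(2k−1)_a}(a,b,q). -/

import Mathlib

/-- The five colours a, b, ab, a², b². -/
inductive Col where
  | a | b | ab | aa | bb
deriving DecidableEq, Inhabited

open Col

/-- Position of a coloured integer in the ordering
1_{ab} < 1_a < 1_{b²} < 1_b < 2_{ab} < 2_a < 3_{a²} < 2_b < 3_{ab} < ⋯ . -/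
def colPos : ℕ × Col → ℕ
  | (k, Col.ab) => 4 * k - 4
  | (k, Col.a)  => 4 * k - 3
  | (k, Col.bb) => 4 * k - 2
  | (k, Col.b)  => 4 * k - 1
  | (k, Col.aa) => 4 * k - 6

/-- Entry of the matrix A: minimal gap below a part of size `k` and colour `x`,
above a part of colour `y`. -/
def colMinGap (k : ℕ) (x y : Col) : ℕ :=
  match x, y with
  | Col.a, y => if k % 2 = 1 then
      (match y with | Col.ab => 1 | _ => 2)
    else
      (match y with | Col.aa => 3 | Col.bb => 3 | _ => 2)
  | Col.bb, y => (match y with | Col.b => 3 | Col.bb => 4 | _ => 2)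
  | Col.b, y => if k % 2 = 1 then
      (match y with | Col.a => 1 | Col.ab => 1 | _ => 2)
    else
      (match y with | Col.a => 1 | Col.ab => 1 | Col.aa => 1 | Col.bb => 3 | _ => 2)
  | Col.ab, y => if k % 2 = 0 then
      (match y with | Col.aa => 3 | Col.bb => 3 | _ => 2)
    else
      (match y with | Col.b => 3 | Col.bb => 3 | _ => 2)
  | Col.aa, y => (match y with | Col.aa => 4 | Col.bb => 4 | _ => 3)

/-- A coloured partition as in the non-dilated Siladić theorem: parts are coloured
positive integers, squared colours only occur on odd integers, there is no part
1_{ab} or 1_{b²}, and consecutive parts satisfy the gap conditions of matrix A. -/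
def IsColPartition (l : List (ℕ × Col)) : Prop :=
  (∀ p ∈ l, 1 ≤ p.1 ∧ ((p.2 = Col.aa ∨ p.2 = Col.bb) → p.1 % 2 = 1) ∧
    p ≠ (1, Col.ab) ∧ p ≠ (1, Col.bb)) ∧
  ∀ i, i + 1 < l.length →
    l[i]!.1 ≥ l[i+1]!.1 + colMinGap l[i]!.1 l[i]!.2 l[i+1]!.2

/-- Number of parts coloured a or ab, plus twice the number of parts coloured a². -/
def aCt (l : List (ℕ × Col)) : ℕ :=
  (l.countP fun p => p.2 == Col.a || p.2 == Col.ab) +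
    2 * (l.countP fun p => p.2 == Col.aa)

/-- Number of parts coloured b or ab, plus twice the number of parts coloured b². -/
def bCt (l : List (ℕ × Col)) : ℕ :=
  (l.countP fun p => p.2 == Col.b || p.2 == Col.ab) +
    2 * (l.countP fun p => p.2 == Col.bb)

/-- D(u,v,n): coloured partitions of n with a-count u and b-count v. -/
noncomputable def Dct (u v n : ℕ) : ℕ :=
  Nat.card {l : List (ℕ × Col) // IsColPartition l ∧
    (l.map Prod.fst).sum = n ∧ aCt l = u ∧ bCt l = v}

/-- d_K(u,v,n): as D(u,v,n) but with largest part at most K in the coloured order;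
integer arguments (negative values give 0). -/
noncomputable def dct (K : ℕ × Col) (u v n : ℤ) : ℕ :=
  Nat.card {l : List (ℕ × Col) // IsColPartition l ∧
    (∀ p ∈ l, colPos p ≤ colPos K) ∧
    ((l.map Prod.fst).sum : ℤ) = n ∧ (aCt l : ℤ) = u ∧ (bCt l : ℤ) = v}

/-- e_K(u,v,n): as d_K(u,v,n) but with largest part exactly K. -/
noncomputable def ect (K : ℕ × Col) (u v n : ℤ) : ℕ :=
  Nat.card {l : List (ℕ × Col) // IsColPartition l ∧
    (∀ p ∈ l, colPos p ≤ colPos K) ∧ l ≠ [] ∧ l.head! = K ∧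
    ((l.map Prod.fst).sum : ℤ) = n ∧ (aCt l : ℤ) = u ∧ (bCt l : ℤ) = v}

/-- The generating function G_K(a,b,q) = 1 + ∑_{u,v≥0,n≥1} d_K(u,v,n) aᵘbᵛqⁿ,
as a formal power series in the variables a = X 0, b = X 1, q = X 2. -/
noncomputable def Gf (K : ℕ × Col) : MvPowerSeries (Fin 3) ℚ :=
  fun e => (dct K (e 0) (e 1) (e 2) : ℚ)


section Aux
open Col

lemma colMinGap_a (k : ℕ) (y : Col) : colMinGap k Col.a y =
    if k % 2 = 1 then (match y with | Col.ab => 1 | _ => 2)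
    else (match y with | Col.aa => 3 | Col.bb => 3 | _ => 2) := rfl

lemma colMinGap_bb (k : ℕ) (y : Col) : colMinGap k Col.bb y =
    (match y with | Col.b => 3 | Col.bb => 4 | _ => 2) := rfl

lemma colMinGap_b (k : ℕ) (y : Col) : colMinGap k Col.b y =
    if k % 2 = 1 then (match y with | Col.a => 1 | Col.ab => 1 | _ => 2)
    else (match y with | Col.a => 1 | Col.ab => 1 | Col.aa => 1 | Col.bb => 3 | _ => 2) := rfl

lemma colMinGap_ab (k : ℕ) (y : Col) : colMinGap k Col.ab y =
    if k % 2 = 0 then (match y with | Col.aa => 3 | Col.bb => 3 | _ => 2)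
    else (match y with | Col.b => 3 | Col.bb => 3 | _ => 2) := rfl

lemma colMinGap_aa (k : ℕ) (y : Col) : colMinGap k Col.aa y =
    (match y with | Col.aa => 4 | Col.bb => 4 | _ => 3) := rfl

lemma colMinGap_pos (k : ℕ) (x y : Col) : 1 ≤ colMinGap k x y := by
  cases x <;> cases y <;>
    simp only [colMinGap_a, colMinGap_b, colMinGap_ab, colMinGap_aa, colMinGap_bb] <;>
    (try split) <;> simp

lemma colPos_lower (q : ℕ × Col) : 4 * q.1 - 6 ≤ colPos q := by
  obtain ⟨m, c⟩ := q; cases c <;> simp [colPos] <;> omega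

lemma colPos_upper (q : ℕ × Col) : colPos q ≤ 4 * q.1 - 1 := by
  obtain ⟨m, c⟩ := q; cases c <;> simp [colPos] <;> omega

lemma IsColPartition.tail {x : ℕ × Col} {l : List (ℕ × Col)}
    (h : IsColPartition (x :: l)) : IsColPartition l := by
  obtain ⟨h1, h2⟩ := h
  refine ⟨fun p hp => h1 p (List.mem_cons_of_mem _ hp), fun i hi => ?_⟩
  have := h2 (i+1) (by simpa using Nat.succ_lt_succ hi)
  simpa using this

lemma IsColPartition.head_gap {x y : ℕ × Col} {l : List (ℕ × Col)}
    (h : IsColPartition (x :: y :: l)) :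
    x.1 ≥ y.1 + colMinGap x.1 x.2 y.2 := by
  have := h.2 0 (by simp)
  simpa using this

lemma IsColPartition.lt_head {x : ℕ × Col} {l : List (ℕ × Col)}
    (h : IsColPartition (x :: l)) : ∀ p ∈ l, p.1 < x.1 := by
  induction l generalizing x with
  | nil => simp
  | cons y t ih =>
    intro p hp
    have hxy : y.1 < x.1 := by
      have h1 := h.head_gap
      have h2 := colMinGap_pos x.1 x.2 y.2
      omega
    rcases List.mem_cons.mp hp with rfl | hp
    · exact hxy
    · exact lt_trans (ih h.tail p hp) hxy

lemma IsColPartition.cons {x : ℕ × Col} {l : List (ℕ × Col)} (hl : IsColPartition l)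
    (hx : 1 ≤ x.1 ∧ ((x.2 = Col.aa ∨ x.2 = Col.bb) → x.1 % 2 = 1) ∧
      x ≠ (1, Col.ab) ∧ x ≠ (1, Col.bb))
    (hgap : ∀ y t, l = y :: t → x.1 ≥ y.1 + colMinGap x.1 x.2 y.2) :
    IsColPartition (x :: l) := by
  constructor
  · intro p hp
    rcases List.mem_cons.mp hp with rfl | hp
    · exact hx
    · exact hl.1 p hp
  · intro i hi
    cases l with
    | nil => simp at hi
    | cons y t =>
      match i with
      | 0 => simpa using hgap y t rfl
      | (j+1) =>
        have hj : j + 1 < (y :: t).length := by simpa using hi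
        have := hl.2 j hj
        simpa using this

end Aux
section Aux2
open Col

instance : Fintype Col :=
  ⟨⟨{Col.a, Col.b, Col.ab, Col.aa, Col.bb}, by decide⟩, fun x => by cases x <;> decide⟩

lemma aCt_cons_ab (m : ℕ) (l : List (ℕ × Col)) :
    aCt ((m, Col.ab) :: l) = aCt l + 1 := by
  simp [aCt, List.countP_cons]; ring

lemma bCt_cons_ab (m : ℕ) (l : List (ℕ × Col)) :
    bCt ((m, Col.ab) :: l) = bCt l + 1 := by
  simp [bCt, List.countP_cons]; ring

lemma finite_parts (P : List (ℕ × Col) → Prop) (n : ℤ)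
    (hP : ∀ l, P l → (∀ p ∈ l, 1 ≤ p.1) ∧ ((l.map Prod.fst).sum : ℤ) = n) :
    Finite {l : List (ℕ × Col) // P l} := by
  rcases lt_or_ge n 0 with hn | hn
  · have : IsEmpty {l : List (ℕ × Col) // P l} := by
      refine ⟨fun ⟨l, hl⟩ => ?_⟩
      have h2 := (hP l hl).2
      have : (0 : ℤ) ≤ ((l.map Prod.fst).sum : ℤ) := Int.natCast_nonneg _
      omega
    infer_instance
  · obtain ⟨m, rfl⟩ := Int.eq_ofNat_of_zero_le hn
    have hsum : ∀ l, P l → (l.map Prod.fst).sum = m := by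
      intro l hl; exact_mod_cast (hP l hl).2
    have hlen : ∀ l, P l → l.length ≤ m := by
      intro l hl
      have := List.length_le_sum_of_one_le (l.map Prod.fst) (by
        intro i hi
        obtain ⟨p, hp, rfl⟩ := List.mem_map.mp hi
        exact (hP l hl).1 p hp)
      simpa [hsum l hl] using this
    have hparts : ∀ l, P l → ∀ p ∈ l, p.1 ≤ m := by
      intro l hl p hp
      have : p.1 ≤ (l.map Prod.fst).sum :=
        List.le_sum_of_mem (List.mem_map.mpr ⟨p, hp, rfl⟩)
      rw [hsum l hl] at this
      exact this
    have : Finite {l : List (Fin (m+1) × Col) // l.length ≤ m} :=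
      (List.finite_length_le (Fin (m+1) × Col) m).to_subtype
    refine Finite.of_injective (fun x : {l : List (ℕ × Col) // P l} =>
      (⟨x.1.map (fun p => (⟨min p.1 m, by omega⟩, p.2)),
        by simpa using hlen x.1 x.2⟩ : {l : List (Fin (m+1) × Col) // l.length ≤ m})) ?_
    intro x y hxy
    have key : ∀ l : List (ℕ × Col), P l →
        (l.map (fun p => ((⟨min p.1 m, by omega⟩ : Fin (m+1)), p.2))).map
          (fun q => ((q.1 : ℕ), q.2)) = l := by
      intro l hl
      rw [List.map_map]
      have : ∀ p ∈ l, ((fun q : Fin (m+1) × Col => ((q.1 : ℕ), q.2)) ∘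
          (fun p : ℕ × Col => ((⟨min p.1 m, by omega⟩ : Fin (m+1)), p.2))) p = id p := by
        intro p hp
        simp [Function.comp, min_eq_left (hparts l hl p hp)]
      rw [List.map_congr_left this, List.map_id]
    have hx := key x.1 x.2
    have hy := key y.1 y.2
    apply Subtype.ext
    rw [← hx, ← hy]
    exact congrArg _ (congrArg Subtype.val hxy)

lemma dct_zero (K : ℕ × Col) {u v n : ℤ} (h : u < 0 ∨ v < 0 ∨ n < 0) :
    dct K u v n = 0 := by
  have : IsEmpty {l : List (ℕ × Col) // IsColPartition l ∧
      (∀ p ∈ l, colPos p ≤ colPos K) ∧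
      ((l.map Prod.fst).sum : ℤ) = n ∧ (aCt l : ℤ) = u ∧ (bCt l : ℤ) = v} := by
    refine ⟨fun ⟨l, _, _, hs, hu, hv⟩ => ?_⟩
    have h1 : (0:ℤ) ≤ ((l.map Prod.fst).sum : ℤ) := Int.natCast_nonneg _
    have h2 : (0:ℤ) ≤ (aCt l : ℤ) := Int.natCast_nonneg _
    have h3 : (0:ℤ) ≤ (bCt l : ℤ) := Int.natCast_nonneg _
    omega
  exact Nat.card_of_isEmpty

end Aux2
section Aux3
open Col

lemma head_eq {k : ℕ} (hk : 1 ≤ k) {l : List (ℕ × Col)} (hl : IsColPartition l)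
    (hbd : ∀ p ∈ l, colPos p ≤ colPos (2*k+1, Col.ab))
    (hmem : (2*k+1, Col.ab) ∈ l) : ∃ t, l = (2*k+1, Col.ab) :: t := by
  cases l with
  | nil => simp at hmem
  | cons x t =>
    rcases List.mem_cons.mp hmem with h | h
    · exact ⟨t, by rw [h]⟩
    · exfalso
      have h1 : 2*k+1 < x.1 := hl.lt_head _ h
      have h2 := colPos_lower x
      have h3 := hbd x (List.mem_cons_self)
      have h4 : colPos (2*k+1, Col.ab) = 4*(2*k+1) - 4 := rfl
      omega

lemma tail_bound {k : ℕ} (hk : 1 ≤ k) {t : List (ℕ × Col)}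
    (hl : IsColPartition ((2*k+1, Col.ab) :: t)) :
    ∀ p ∈ t, colPos p ≤ colPos (2*k-1, Col.a) := by
  have hpos : colPos (2*k-1, Col.a) = 4*(2*k-1) - 3 := rfl
  cases t with
  | nil => simp
  | cons y s =>
    have hgap := hl.head_gap
    simp only [colMinGap_ab] at hgap
    rw [if_neg (by omega : ¬ (2*k+1) % 2 = 0)] at hgap
    intro p hp
    rcases List.mem_cons.mp hp with rfl | hp
    · obtain ⟨m, c⟩ := p
      cases c <;> simp [colPos] at hgap ⊢ <;> omega
    · have hlt : p.1 < y.1 := (hl.tail).lt_head p hp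
      have hy : y.1 + 2 ≤ 2*k+1 := by
        obtain ⟨m, c⟩ := y
        cases c <;> simp at hgap <;> omega
      have h5 := colPos_upper p
      omega

lemma cons_gap {k : ℕ} (hk : 1 ≤ k) (p : ℕ × Col) (h1 : 1 ≤ p.1)
    (hbd : colPos p ≤ colPos (2*k-1, Col.a)) :
    (2*k+1, Col.ab).1 ≥ p.1 + colMinGap (2*k+1, Col.ab).1 (2*k+1, Col.ab).2 p.2 := by
  obtain ⟨m, c⟩ := p
  show 2*k+1 ≥ m + colMinGap (2*k+1) Col.ab c
  rw [colMinGap_ab, if_neg (by omega : ¬ (2*k+1) % 2 = 0)]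
  cases c <;> simp [colPos] at hbd ⊢ <;> omega

lemma bound_lower {k : ℕ} (hk : 1 ≤ k) {l : List (ℕ × Col)}
    (h1 : ∀ p ∈ l, 1 ≤ p.1)
    (hbd : ∀ p ∈ l, colPos p ≤ colPos (2*k+1, Col.ab))
    (hne : (2*k+1, Col.ab) ∉ l) : ∀ p ∈ l, colPos p ≤ colPos (2*k, Col.b) := by
  intro p hp
  have h2 := hbd p hp
  have h3 : p ≠ (2*k+1, Col.ab) := fun h => hne (h ▸ hp)
  have h4 := h1 p hp
  obtain ⟨m, c⟩ := p
  cases c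
  all_goals simp [colPos] at h2 ⊢
  all_goals try simp at h3
  all_goals omega

end Aux3
section Aux4
open Col

/-- Auxiliary: the subtype counted by `dct`. -/
def PartsBdd (K : ℕ × Col) (u v n : ℤ) : Type :=
  {l : List (ℕ × Col) // IsColPartition l ∧
    (∀ p ∈ l, colPos p ≤ colPos K) ∧
    ((l.map Prod.fst).sum : ℤ) = n ∧ (aCt l : ℤ) = u ∧ (bCt l : ℤ) = v}

lemma dct_def (K : ℕ × Col) (u v n : ℤ) : dct K u v n = Nat.card (PartsBdd K u v n) := rfl

instance PartsBdd.finite (K : ℕ × Col) (u v n : ℤ) : Finite (PartsBdd K u v n) :=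
  finite_parts _ n (fun l hl => ⟨fun p hp => (hl.1.1 p hp).1, hl.2.2.1⟩)

instance (K : ℕ × Col) (u v n : ℤ) (q : PartsBdd K u v n → Prop) :
    Finite {x : PartsBdd K u v n // q x} :=
  Subtype.finite

lemma key_card (k : ℕ) (hk : 1 ≤ k) (u v n : ℤ) :
    dct (2*k+1, Col.ab) u v n =
      dct (2*k, Col.b) u v n + dct (2*k-1, Col.a) (u-1) (v-1) (n-(2*k+1)) := by
  classical
  simp only [dct_def]
  have key := Nat.card_congr
    (Equiv.sumCompl (fun x : PartsBdd (2*k+1, Col.ab) u v n => (2*k+1, Col.ab) ∈ x.1)).symm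
  rw [key, Nat.card_sum, add_comm]
  congr 1
  · -- complement part: largest part ≤ (2k)_b
    apply Nat.card_congr
    refine Equiv.mk
      (fun x => ⟨x.1.1, ?_, ?_, x.1.2.2.2⟩)
      (fun y => ⟨⟨y.1, y.2.1, ?_, y.2.2.2⟩, ?_⟩)
      (fun x => Subtype.ext (Subtype.ext rfl)) (fun y => rfl)
    · exact x.1.2.1
    · exact bound_lower hk (fun p hp => (x.1.2.1.1 p hp).1) x.1.2.2.1 x.2
    · intro p hp
      have h1 := y.2.2.1 p hp
      have h2 : colPos (2*k, Col.b) = 4*(2*k) - 1 := rfl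
      have h3 : colPos (2*k+1, Col.ab) = 4*(2*k+1) - 4 := rfl
      omega
    · intro hmem
      have h1 := y.2.2.1 _ hmem
      have h2 : colPos (2*k, Col.b) = 4*(2*k) - 1 := rfl
      have h3 : colPos (2*k+1, Col.ab) = 4*(2*k+1) - 4 := rfl
      omega
  · -- member part: remove the head (2k+1)_ab
    apply Nat.card_congr
    refine Equiv.mk
      (fun x => ⟨x.1.1.tail, ?_⟩)
      (fun y => ⟨⟨(2*k+1, Col.ab) :: y.1, ?_⟩, List.mem_cons_self⟩)
      (fun x => ?_) (fun y => rfl)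
    · obtain ⟨⟨l, hl, hbd, hs, hu, hv⟩, hmem⟩ := x
      obtain ⟨t, rfl⟩ := head_eq hk hl hbd hmem
      simp only [List.tail_cons]
      refine ⟨hl.tail, tail_bound hk hl, ?_, ?_, ?_⟩
      · simp only [List.map_cons, List.sum_cons] at hs
        push_cast at hs ⊢
        omega
      · rw [aCt_cons_ab] at hu; push_cast at hu ⊢; omega
      · rw [bCt_cons_ab] at hv; push_cast at hv ⊢; omega
    · obtain ⟨l, hl, hbd, hs, hu, hv⟩ := y
      refine ⟨?_, ?_, ?_, ?_, ?_⟩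
      · refine hl.cons ⟨by omega, by simp, by simp; omega, by simp⟩ ?_
        intro z t hzt
        refine cons_gap hk z ?_ ?_
        · exact (hl.1 z (by rw [hzt]; exact List.mem_cons_self)).1
        · exact hbd z (by rw [hzt]; exact List.mem_cons_self)
      · intro p hp
        rcases List.mem_cons.mp hp with rfl | hp
        · exact le_refl _
        · have h1 := hbd p hp
          have h2 : colPos (2*k-1, Col.a) = 4*(2*k-1) - 3 := rfl
          have h3 : colPos (2*k+1, Col.ab) = 4*(2*k+1) - 4 := rfl
          omega
      · simp only [List.map_cons, List.sum_cons]
        push_cast at hs ⊢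
        omega
      · rw [aCt_cons_ab]; push_cast at hu ⊢; omega
      · rw [bCt_cons_ab]; push_cast at hv ⊢; omega
    · obtain ⟨⟨l, hl, hbd, hs, hu, hv⟩, hmem⟩ := x
      obtain ⟨t, rfl⟩ := head_eq hk hl hbd hmem
      rfl

end Aux4

open MvPowerSeries in
/-- q-difference equation (3.9):
G_{(2k+1)_{ab}} = G_{(2k)_b} + abq^{2k+1} G_{(2k-1)_a}. -/
theorem qdiff_eq1 (k : ℕ) (hk : 1 ≤ k) :
    Gf (2*k+1, Col.ab) =
      Gf (2*k, Col.b) +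
      (X 0 * X 1 * X 2 ^ (2*k+1) : MvPowerSeries (Fin 3) ℚ) * Gf (2*k-1, Col.a) := by
  classical
  set d : Fin 3 →₀ ℕ :=
    Finsupp.single 0 1 + Finsupp.single 1 1 + Finsupp.single 2 (2*k+1) with hd
  have hmon : (X 0 * X 1 * X 2 ^ (2*k+1) : MvPowerSeries (Fin 3) ℚ)
      = monomial d 1 := by
    rw [X_pow_eq]
    rw [show (X 0 : MvPowerSeries (Fin 3) ℚ) = monomial (Finsupp.single 0 1) 1 from rfl,
        show (X 1 : MvPowerSeries (Fin 3) ℚ) = monomial (Finsupp.single 1 1) 1 from rfl,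
        monomial_mul_monomial, monomial_mul_monomial, one_mul, one_mul, hd]
  have hGf : ∀ (K : ℕ × Col) (e : Fin 3 →₀ ℕ),
      (coeff e (Gf K)) = ((dct K (e 0) (e 1) (e 2) : ℕ) : ℚ) := fun K e => rfl
  have hd0 : d 0 = 1 := by simp [hd]
  have hd1 : d 1 = 1 := by simp [hd]
  have hd2 : d 2 = 2*k+1 := by simp [hd]
  apply MvPowerSeries.ext
  intro e
  rw [map_add, hmon, coeff_monomial_mul, one_mul, hGf, hGf]
  have hkey := key_card k hk (e 0) (e 1) (e 2)
  by_cases hle : d ≤ e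
  · rw [if_pos hle, hGf]
    have hle' := Finsupp.le_def.mp hle
    have he0 : 1 ≤ e 0 := hd0 ▸ hle' 0
    have he1 : 1 ≤ e 1 := hd1 ▸ hle' 1
    have he2 : 2*k+1 ≤ e 2 := hd2 ▸ hle' 2
    have ha : (((e - d) 0 : ℕ) : ℤ) = (e 0 : ℤ) - 1 := by
      rw [Finsupp.tsub_apply, hd0, Nat.cast_sub he0, Nat.cast_one]
    have hb : (((e - d) 1 : ℕ) : ℤ) = (e 1 : ℤ) - 1 := by
      rw [Finsupp.tsub_apply, hd1, Nat.cast_sub he1, Nat.cast_one]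
    have hc : (((e - d) 2 : ℕ) : ℤ) = (e 2 : ℤ) - (2*k+1) := by
      rw [Finsupp.tsub_apply, hd2, Nat.cast_sub he2]
      push_cast
      ring
    rw [← ha, ← hb, ← hc] at hkey
    rw [hkey]
    push_cast
    ring
  · rw [if_neg hle, add_zero]
    have h0 : dct (2*k-1, Col.a) ((e 0 : ℤ)-1) ((e 1 : ℤ)-1) ((e 2 : ℤ)-(2*k+1)) = 0 := by
      apply dct_zero
      by_cases h0 : 1 ≤ e 0
      · by_cases h1 : 1 ≤ e 1
        · by_cases h2 : 2*k+1 ≤ e 2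
          · exfalso
            apply hle
            rw [Finsupp.le_def]
            intro i
            match i with
            | 0 => exact le_trans (le_of_eq hd0) h0
            | 1 => exact le_trans (le_of_eq hd1) h1
            | 2 => exact le_trans (le_of_eq hd2) h2
          · right; right; omega
        · right; left; omega
      · left; omega
    rw [hkey, h0, add_zero]
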